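/- Suppose G(e^{jω}) is unitary for all ω, differentiable at ω₁, and G is holomorphic in a neighborhood of e^{jω₁}. Then lim_{ε→0⁺} v*(I - G(e^{ε+jω₁})*G(e^{ε+jω₁}))v / (1 - e^{-2ε}) = v*F₁v, where F₁ = j·G*(e^{jω₁})(dG/dω)(e^{jω₁}). -/

import Mathlib

open scoped Matrix Topology

/-- if `G(e^{jω})` is unitary for all `ω`, differentiable at `ω₁`, and `G`
is holomorphic near `e^{jω₁}`, then
`lim_{ε→0⁺} v*(I - G(e^{ε+jω₁})* G(e^{ε+jω₁}))v / (1 - e^{-2ε}) = v* F₁ v`,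
where `F₁ = j G*(e^{jω₁}) (dG/dω)(e^{jω₁})`. -/
theorem stmt18 (m : ℕ) (G : ℂ → Matrix (Fin m) (Fin m) ℂ) (ω₁ : ℝ) (v : Fin m → ℂ)
    (hunit : ∀ θ : ℝ, (G (Complex.exp (Complex.I * (θ : ℂ))))ᴴ
      * G (Complex.exp (Complex.I * (θ : ℂ))) = 1)
    (hanalytic : ∀ a b : Fin m,
      AnalyticAt ℂ (fun z => G z a b) (Complex.exp (Complex.I * (ω₁ : ℂ))))
    (G' : Matrix (Fin m) (Fin m) ℂ)
    (hderiv : ∀ a b : Fin m,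
      HasDerivAt (fun θ : ℝ => G (Complex.exp (Complex.I * (θ : ℂ))) a b) (G' a b) ω₁)
    (F₁ : Matrix (Fin m) (Fin m) ℂ)
    (hF₁ : F₁ = Complex.I • ((G (Complex.exp (Complex.I * (ω₁ : ℂ))))ᴴ * G')) :
    Filter.Tendsto
      (fun ε : ℝ =>
        (star v ⬝ᵥ (((1 : Matrix (Fin m) (Fin m) ℂ)
            - (G (Complex.exp ((ε : ℂ) + Complex.I * (ω₁ : ℂ))))ᴴ
              * G (Complex.exp ((ε : ℂ) + Complex.I * (ω₁ : ℂ)))) *ᵥ v))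
          / (1 - Complex.exp ((-2 * ε : ℝ) : ℂ)))
      (𝓝[>] 0) (𝓝 (star v ⬝ᵥ (F₁ *ᵥ v))) := by
  set z₀ : ℂ := Complex.exp (Complex.I * (ω₁ : ℂ)) with hz₀
  have h0 : Complex.exp (((0:ℝ):ℂ) + Complex.I * (ω₁:ℂ)) = z₀ := by
    rw [hz₀]; norm_num
  have hexp1 : HasDerivAt (fun ε : ℝ => Complex.exp ((ε:ℂ) + Complex.I * (ω₁:ℂ))) z₀ 0 := by
    have h : HasDerivAt (fun z : ℂ => Complex.exp (z + Complex.I * (ω₁:ℂ)))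
        (Complex.exp (((0:ℝ):ℂ) + Complex.I * (ω₁:ℂ))) (((0:ℝ):ℂ)) := by
      simpa using ((hasDerivAt_id (((0:ℝ):ℂ))).add_const (Complex.I * (ω₁:ℂ))).cexp
    rw [h0] at h
    exact h.comp_ofReal
  have hexp2 : HasDerivAt (fun θ : ℝ => Complex.exp (Complex.I * (θ:ℂ))) (Complex.I * z₀) ω₁ := by
    have h : HasDerivAt (fun z : ℂ => Complex.exp (Complex.I * z))
        (Complex.I * z₀) (((ω₁:ℝ):ℂ)) := by
      have := ((hasDerivAt_id (((ω₁:ℝ):ℂ))).const_mul Complex.I).cexp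
      simpa [hz₀, mul_comm] using this
    exact h.comp_ofReal
  set D : Matrix (Fin m) (Fin m) ℂ := Matrix.of (fun a b => deriv (fun z => G z a b) z₀) with hDdef
  have hDd : ∀ a b, HasDerivAt (fun z => G z a b) (D a b) z₀ :=
    fun a b => (hanalytic a b).differentiableAt.hasDerivAt
  have hchain : ∀ a b, HasDerivAt (fun θ : ℝ => G (Complex.exp (Complex.I * (θ:ℂ))) a b)
      (D a b * (Complex.I * z₀)) ω₁ := by
    intro a b
    have := (hDd a b).comp ω₁ hexp2
    exact this
  have hG'eq : ∀ a b, G' a b = D a b * (Complex.I * z₀) :=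
    fun a b => (hderiv a b).unique (hchain a b)
  have hEval : ∀ a b, D a b * z₀ = -(Complex.I * G' a b) := by
    intro a b
    rw [hG'eq a b]
    linear_combination (D a b * z₀) * Complex.I_sq
  set E : Matrix (Fin m) (Fin m) ℂ := (-Complex.I) • G' with hEdef
  have hEapp : ∀ a b, E a b = -(Complex.I * G' a b) := by
    intro a b; simp [hEdef, Matrix.smul_apply]
  have hEd : ∀ a b, HasDerivAt (fun ε : ℝ => G (Complex.exp ((ε:ℂ) + Complex.I * (ω₁:ℂ))) a b)
      (E a b) 0 := by
    intro a b
    have hd : HasDerivAt (fun z => G z a b) (D a b)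
        (Complex.exp (((0:ℝ):ℂ) + Complex.I * (ω₁:ℂ))) := by
      rw [h0]; exact hDd a b
    have := hd.comp (0:ℝ) hexp1
    rw [hEapp a b, ← hEval a b]
    exact this
  have hskew : G'ᴴ * G z₀ + (G z₀)ᴴ * G' = 0 := by
    ext i j
    have hfun : (fun θ : ℝ => ∑ k, star (G (Complex.exp (Complex.I * (θ:ℂ))) k i)
        * G (Complex.exp (Complex.I * (θ:ℂ))) k j) = fun _ => (1 : Matrix (Fin m) (Fin m) ℂ) i j := by
      funext θ
      have := congrFun (congrFun (hunit θ) i) j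
      simpa [Matrix.mul_apply, Matrix.conjTranspose_apply] using this
    have hd1 : HasDerivAt (fun θ : ℝ => ∑ k, star (G (Complex.exp (Complex.I * (θ:ℂ))) k i)
        * G (Complex.exp (Complex.I * (θ:ℂ))) k j)
        (∑ k, (star (G' k i) * G z₀ k j + star (G z₀ k i) * G' k j)) ω₁ := by
      apply HasDerivAt.fun_sum
      intro k _
      exact ((hderiv k i).star.mul (hderiv k j))
    have hd2 : HasDerivAt (fun θ : ℝ => ∑ k, star (G (Complex.exp (Complex.I * (θ:ℂ))) k i)
        * G (Complex.exp (Complex.I * (θ:ℂ))) k j) 0 ω₁ := by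
      rw [hfun]; exact hasDerivAt_const _ _
    have := hd1.unique hd2
    simpa [Matrix.add_apply, Matrix.mul_apply, Matrix.conjTranspose_apply,
      Finset.sum_add_distrib] using this
  set c : ℂ := star v ⬝ᵥ (F₁ *ᵥ v) with hc
  set φ : ℝ → ℂ := fun ε =>
      star v ⬝ᵥ (((1 : Matrix (Fin m) (Fin m) ℂ)
        - (G (Complex.exp ((ε : ℂ) + Complex.I * (ω₁ : ℂ))))ᴴ
          * G (Complex.exp ((ε : ℂ) + Complex.I * (ω₁ : ℂ)))) *ᵥ v) with hφdef
  have hφeq : φ = fun ε : ℝ => (star v ⬝ᵥ v)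
      - ∑ k, star (∑ j, G (Complex.exp ((ε:ℂ) + Complex.I * (ω₁:ℂ))) k j * v j)
          * (∑ j, G (Complex.exp ((ε:ℂ) + Complex.I * (ω₁:ℂ))) k j * v j) := by
    funext ε
    set A := G (Complex.exp ((ε:ℂ) + Complex.I * (ω₁:ℂ)))
    have h1 : star v ⬝ᵥ (((1 : Matrix (Fin m) (Fin m) ℂ) - Aᴴ * A) *ᵥ v)
        = star v ⬝ᵥ v - star (A *ᵥ v) ⬝ᵥ (A *ᵥ v) := by
      simp [Matrix.sub_mulVec, dotProduct_sub, Matrix.one_mulVec,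
        Matrix.star_mulVec, Matrix.dotProduct_mulVec, Matrix.vecMul_vecMul]
    simp only [hφdef, h1]
    exact h1.trans (by simp [dotProduct, Matrix.mulVec, Pi.star_apply])
  have hw0 : ∀ k, (∑ j, G (Complex.exp ((((0:ℝ)):ℂ) + Complex.I * (ω₁:ℂ))) k j * v j)
      = (G z₀ *ᵥ v) k := by
    intro k; rw [h0]; simp [Matrix.mulVec, dotProduct]
  have hφd : HasDerivAt φ
      (-(∑ k, (star ((E *ᵥ v) k) * (G z₀ *ᵥ v) k + star ((G z₀ *ᵥ v) k) * (E *ᵥ v) k))) 0 := by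
    rw [hφeq]
    have hsum : HasDerivAt (fun ε : ℝ =>
        ∑ k, star (∑ j, G (Complex.exp ((ε:ℂ) + Complex.I * (ω₁:ℂ))) k j * v j)
          * (∑ j, G (Complex.exp ((ε:ℂ) + Complex.I * (ω₁:ℂ))) k j * v j))
        (∑ k, (star ((E *ᵥ v) k) * (G z₀ *ᵥ v) k + star ((G z₀ *ᵥ v) k) * (E *ᵥ v) k)) 0 := by
      apply HasDerivAt.fun_sum
      intro k _
      have hwk : HasDerivAt (fun ε : ℝ =>
          ∑ j, G (Complex.exp ((ε:ℂ) + Complex.I * (ω₁:ℂ))) k j * v j) ((E *ᵥ v) k) 0 := by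
        have hEv : ((E *ᵥ v) k) = ∑ j, E k j * v j := by
          simp [Matrix.mulVec, dotProduct]
        rw [hEv]
        exact HasDerivAt.fun_sum (fun j _ => (hEd k j).mul_const (v j))
      have := (hwk.star.mul hwk)
      rw [hw0 k] at this
      exact this
    simpa using (hasDerivAt_const (0:ℝ) (star v ⬝ᵥ v)).fun_sub hsum
  have hderval : (-(∑ k, (star ((E *ᵥ v) k) * (G z₀ *ᵥ v) k
      + star ((G z₀ *ᵥ v) k) * (E *ᵥ v) k))) = 2 * c := by
    have hsum1 : (∑ k, star ((E *ᵥ v) k) * (G z₀ *ᵥ v) k)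
        = star v ⬝ᵥ ((Eᴴ * G z₀) *ᵥ v) := by
      have hL : (∑ k, star ((E *ᵥ v) k) * (G z₀ *ᵥ v) k)
          = star (E *ᵥ v) ⬝ᵥ (G z₀ *ᵥ v) := by simp [dotProduct]
      rw [hL]
      simp [Matrix.star_mulVec, Matrix.dotProduct_mulVec, Matrix.vecMul_vecMul]
    have hsum2 : (∑ k, star ((G z₀ *ᵥ v) k) * (E *ᵥ v) k)
        = star v ⬝ᵥ (((G z₀)ᴴ * E) *ᵥ v) := by
      have hL : (∑ k, star ((G z₀ *ᵥ v) k) * (E *ᵥ v) k)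
          = star (G z₀ *ᵥ v) ⬝ᵥ (E *ᵥ v) := by simp [dotProduct]
      rw [hL]
      simp [Matrix.star_mulVec, Matrix.dotProduct_mulVec, Matrix.vecMul_vecMul]
    rw [Finset.sum_add_distrib, hsum1, hsum2, ← dotProduct_add, ← Matrix.add_mulVec]
    have hmat : Eᴴ * G z₀ + (G z₀)ᴴ * E = (-2 : ℂ) • F₁ := by
      have hskew' : G'ᴴ * G z₀ = -((G z₀)ᴴ * G') := eq_neg_of_add_eq_zero_left hskew
      rw [hEdef, hF₁, Matrix.conjTranspose_smul, Matrix.smul_mul, Matrix.mul_smul, hskew']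
      simp only [star_neg, Complex.star_def, Complex.conj_I, neg_neg]
      module
    rw [hmat, Matrix.smul_mulVec, dotProduct_smul, ← hc]
    simp [smul_eq_mul]
  rw [hderval] at hφd
  have hA0 : (G z₀)ᴴ * G z₀ = 1 := hunit ω₁
  have hφ0 : φ 0 = 0 := by
    simp only [hφdef, h0, hA0, sub_self, Matrix.zero_mulVec, dotProduct_zero]
  -- denominator
  set ψ : ℝ → ℂ := fun ε : ℝ => 1 - Complex.exp ((-2 * ε : ℝ) : ℂ) with hψdef
  have hψ0 : ψ 0 = 0 := by simp [hψdef]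
  have hψd : HasDerivAt ψ 2 0 := by
    have heq : (fun ε : ℝ => Complex.exp ((-2 * ε : ℝ) : ℂ))
        = fun ε : ℝ => Complex.exp ((-2 : ℂ) * (ε:ℂ)) := by
      funext ε; push_cast; ring_nf
    have h1 : HasDerivAt (fun ε : ℝ => Complex.exp ((-2 * ε : ℝ) : ℂ)) (-2) 0 := by
      rw [heq]
      have h : HasDerivAt (fun z : ℂ => Complex.exp ((-2) * z)) (-2) (((0:ℝ):ℂ)) := by
        have := ((hasDerivAt_id (((0:ℝ):ℂ))).const_mul (-2 : ℂ)).cexp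
        simpa [mul_comm] using this
      exact h.comp_ofReal
    have := (hasDerivAt_const (0:ℝ) (1:ℂ)).fun_sub h1
    simpa [hψdef] using this
  -- slopes
  have hmono : 𝓝[>] (0:ℝ) ≤ 𝓝[≠] (0:ℝ) :=
    nhdsWithin_mono 0 (fun x hx => ne_of_gt hx)
  have hslope1 : Filter.Tendsto (fun ε : ℝ => φ ε / (ε:ℂ)) (𝓝[>] 0) (𝓝 (2 * c)) := by
    have h := (hasDerivAt_iff_tendsto_slope.mp hφd).mono_left hmono
    refine h.congr (fun ε => ?_)
    simp [slope, hφ0, Complex.real_smul, div_eq_inv_mul]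
  have hslope2 : Filter.Tendsto (fun ε : ℝ => ψ ε / (ε:ℂ)) (𝓝[>] 0) (𝓝 2) := by
    have h := (hasDerivAt_iff_tendsto_slope.mp hψd).mono_left hmono
    refine h.congr (fun ε => ?_)
    simp [slope, hψ0, Complex.real_smul, div_eq_inv_mul]
  have hdiv := hslope1.div hslope2 two_ne_zero
  have h2c : (2 * c) / 2 = c := by ring
  rw [h2c] at hdiv
  show Filter.Tendsto (fun ε : ℝ => φ ε / ψ ε) (𝓝[>] 0) (𝓝 c)
  apply hdiv.congr'
  filter_upwards [self_mem_nhdsWithin] with ε hε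
  have hne : (ε:ℂ) ≠ 0 := by
    exact_mod_cast ne_of_gt (hε : (0:ℝ) < ε)
  by_cases hψz : ψ ε = 0
  · simp [hψz]
  · rw [Pi.div_apply]; field_simp
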